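/- If the t−1 step optimal value function of a finite POMDP is represented by a set Γ_{t−1} of α-vectors, then the t-step optimal value function can be represented by a set Γ_t of α-vectors with cardinality |Γ_t| ≤ |A| · |Γ_{t−1}|^{|Z|}. -/

import Mathlib

open Finset

private lemma sum_sup'_eq_sup'_pi {Z X : Type} [Fintype Z] [DecidableEq Z]
    (Γ : Finset X) (hΓ : Γ.Nonempty) (g : Z → X → ℝ) :
    ∑ z, Γ.sup' hΓ (g z) =
      (Fintype.piFinset fun _ : Z => Γ).sup'
        (Fintype.piFinset_nonempty.2 fun _ => hΓ) (fun f => ∑ z, g z (f z)) := by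
  apply le_antisymm
  · choose φ hφ hφeq using fun z => Finset.exists_mem_eq_sup' hΓ (g z)
    have hmem : φ ∈ Fintype.piFinset fun _ : Z => Γ := Fintype.mem_piFinset.2 hφ
    calc ∑ z, Γ.sup' hΓ (g z) = ∑ z, g z (φ z) := by
          exact Finset.sum_congr rfl fun z _ => hφeq z
      _ ≤ _ := Finset.le_sup' (fun f => ∑ z, g z (f z)) hmem
  · apply Finset.sup'_le
    intro f hf
    exact Finset.sum_le_sum fun z _ => Finset.le_sup' (g z) (Fintype.mem_piFinset.1 hf z)

private lemma add_mul_sup' {X : Type} (s : Finset X) (hs : s.Nonempty)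
    (g : X → ℝ) (c γ : ℝ) (hγ : 0 ≤ γ) :
    c + γ * s.sup' hs g = s.sup' hs (fun x => c + γ * g x) := by
  apply le_antisymm
  · obtain ⟨x, hx, hxeq⟩ := Finset.exists_mem_eq_sup' hs g
    rw [hxeq]
    exact Finset.le_sup' (fun x => c + γ * g x) hx
  · apply Finset.sup'_le
    intro x hx
    exact add_le_add le_rfl (mul_le_mul_of_nonneg_left (Finset.le_sup' g hx) hγ)

/-- If the `(t-1)`-step optimal value function of a finite POMDP is
represented by a set `Γ_{t-1}` of α-vectors, then the Bellman backup `V_t` is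
represented by a set `Γ_t` of α-vectors with `|Γ_t| ≤ |A| · |Γ_{t-1}|^{|Z|}`. -/
theorem alpha_vector_backup_card_bound
    {S A Z : Type} [Fintype S] [Fintype A] [Fintype Z] [Nonempty A]
    (P : S → A → S → ℝ) (R : S → A → ℝ) (O : A → S → Z → ℝ) (γ : ℝ)
    (hγ0 : 0 ≤ γ)
    (hP0 : ∀ s a s', 0 ≤ P s a s') (hP1 : ∀ s a, ∑ s', P s a s' = 1)
    (hO0 : ∀ a s' z, 0 ≤ O a s' z) (hO1 : ∀ a s', ∑ z, O a s' z = 1)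
    -- V_{t-1}, represented by the α-vector set Γ_{t-1}
    (Vprev : (S → ℝ) → ℝ)
    (Γprev : Finset (S → ℝ)) (hΓprev : Γprev.Nonempty)
    (hrep : ∀ b : S → ℝ, (∀ s, 0 ≤ b s) → (∑ s, b s) = 1 →
      Vprev b = Γprev.sup' hΓprev (fun α => ∑ s, α s * b s))
    -- V_t, the Bellman backup of V_{t-1}
    (Vt : (S → ℝ) → ℝ)
    (hVt : ∀ b : S → ℝ, (∀ s, 0 ≤ b s) → (∑ s, b s) = 1 →
      Vt b = univ.sup' univ_nonempty (fun a =>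
        (∑ s, b s * R s a) +
        γ * ∑ z, (∑ s', O a s' z * ∑ s, P s a s' * b s) *
          Vprev (fun s' => (O a s' z * ∑ s, P s a s' * b s) /
            (∑ s'', O a s'' z * ∑ s, P s a s'' * b s)))) :
    ∃ Γ : Finset (S → ℝ), ∃ hΓ : Γ.Nonempty,
      Γ.card ≤ Fintype.card A * Γprev.card ^ Fintype.card Z ∧
      ∀ b : S → ℝ, (∀ s, 0 ≤ b s) → (∑ s, b s) = 1 →
        Vt b = Γ.sup' hΓ (fun α => ∑ s, α s * b s) := by
  classical
  set piF : Finset (Z → S → ℝ) := Fintype.piFinset fun _ : Z => Γprev with hpiF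
  have hpiFne : piF.Nonempty := Fintype.piFinset_nonempty.2 fun _ => hΓprev
  set vec : A × (Z → S → ℝ) → S → ℝ :=
    fun p s => R s p.1 + γ * ∑ z, ∑ s', P s p.1 s' * O p.1 s' z * p.2 z s' with hvec
  have hprodne : ((univ : Finset A) ×ˢ piF).Nonempty :=
    Finset.Nonempty.product univ_nonempty hpiFne
  refine ⟨((univ : Finset A) ×ˢ piF).image vec, hprodne.image vec, ?_, ?_⟩
  · calc (((univ : Finset A) ×ˢ piF).image vec).card
        ≤ ((univ : Finset A) ×ˢ piF).card := Finset.card_image_le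
      _ = Fintype.card A * Γprev.card ^ Fintype.card Z := by
          rw [Finset.card_product, Finset.card_univ, hpiF, Fintype.card_piFinset]
          simp [Finset.prod_const]
  · intro b hb0 hb1
    rw [hVt b hb0 hb1, Finset.sup'_image, Finset.sup'_product_left]
    apply Finset.sup'_congr _ rfl
    intro a _
    -- per-observation claim
    have key : ∀ z : Z,
        (∑ s', O a s' z * ∑ s, P s a s' * b s) *
          Vprev (fun s' => (O a s' z * ∑ s, P s a s' * b s) /
            (∑ s'', O a s'' z * ∑ s, P s a s'' * b s))
        = Γprev.sup' hΓprev
            (fun α => ∑ s', α s' * (O a s' z * ∑ s, P s a s' * b s)) := by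
      intro z
      set num : S → ℝ := fun s' => O a s' z * ∑ s, P s a s' * b s with hnum
      have hnum0 : ∀ s', 0 ≤ num s' := fun s' =>
        mul_nonneg (hO0 a s' z) (Finset.sum_nonneg fun s _ => mul_nonneg (hP0 s a s') (hb0 s))
      set D : ℝ := ∑ s'', num s'' with hD
      have hD0 : 0 ≤ D := Finset.sum_nonneg fun s' _ => hnum0 s'
      rcases eq_or_lt_of_le hD0 with hDz | hDpos
      · have hzero : ∀ s' ∈ (univ : Finset S), num s' = 0 :=
          (Finset.sum_eq_zero_iff_of_nonneg fun s' _ => hnum0 s').1 hDz.symm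
        have hd : D = 0 := hDz.symm
        rw [hd, zero_mul]
        symm
        have : ∀ α ∈ Γprev, (∑ s', α s' * (O a s' z * ∑ s, P s a s' * b s)) = 0 := by
          intro α _
          apply Finset.sum_eq_zero
          intro s' _
          rw [show O a s' z * ∑ s, P s a s' * b s = num s' from rfl,
            hzero s' (Finset.mem_univ s'), mul_zero]
        rw [Finset.sup'_congr hΓprev rfl this, Finset.sup'_const]
      · have hbel0 : ∀ s', 0 ≤ num s' / D := fun s' => div_nonneg (hnum0 s') hD0
        have hbel1 : (∑ s', num s' / D) = 1 := by
          rw [← Finset.sum_div, ← hD, div_self (ne_of_gt hDpos)]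
        have hrw := hrep (fun s' => num s' / D) hbel0 hbel1
        have heq : (fun s' => (O a s' z * ∑ s, P s a s' * b s) / D)
            = fun s' => num s' / D := rfl
        rw [heq, hrw, Finset.mul₀_sup' hDpos.le]
        apply Finset.sup'_congr hΓprev rfl
        intro α _
        rw [Finset.mul_sum]
        apply Finset.sum_congr rfl
        intro s' _
        rw [show O a s' z * ∑ s, P s a s' * b s = num s' from rfl]
        field_simp
    simp_rw [key]
    rw [sum_sup'_eq_sup'_pi Γprev hΓprev, add_mul_sup' _ _ _ _ _ hγ0]
    apply Finset.sup'_congr _ rfl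
    intro f _
    -- algebraic rearrangement
    simp only [Function.comp_apply]
    symm
    rw [Finset.sum_congr rfl (fun s _ => add_mul (R s a)
      (γ * ∑ z, ∑ s', P s a s' * O a s' z * f z s') (b s)),
      Finset.sum_add_distrib]
    congr 1
    · exact Finset.sum_congr rfl fun s _ => mul_comm _ _
    · simp_rw [mul_assoc γ, ← Finset.mul_sum]
      congr 1
      simp_rw [Finset.sum_mul, Finset.mul_sum]
      rw [Finset.sum_comm]
      apply Finset.sum_congr rfl
      intro z _
      rw [Finset.sum_comm]
      apply Finset.sum_congr rfl
      intro s' _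
      apply Finset.sum_congr rfl
      intro s _
      ring
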